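/- arXiv:2408.03323 — 6 statements merged into one kernel-verified Lean document; each statement's English description precedes it below -/
import Mathlib

section
/- Let Ω be a nonempty finite set and let p : ℝ^m → Ω → ℝ be a family of probability mass functions (p(λ,x) ≥ 0 for all x and Σ_{x∈Ω} p(λ,x) = 1 for all λ). Fix λ₀ ∈ ℝ^m and suppose there exists a function L : ℝ^m × Ω → ℝ^m such that: (1) for every δλ in some neighborhood of 0 and every x ∈ Ω, (1 + exp(−δλ·L(δλ,x)))⁻¹ · (p(λ₀ + δλ/2, x) + p(λ₀ − δλ/2, x)) = p(λ₀ + δλ/2, x); (2) for each x ∈ Ω the map δλ ↦ L(δλ,x) is continuous at δλ = 0; (3) for each x ∈ Ω the map λ ↦ p(λ,x) is differentiable at λ₀; (4) for each x ∈ Ω with p(λ₀,x) = 0 one has p(λ₀ + δλ, x) = o(‖δλ‖²) as δλ → 0. Define ĝ_{μν} = Σ_{x∈Ω} p(λ₀,x) · L(0,x)_μ · L(0,x)_ν. Then the classical fidelity satisfies F_c(p(λ₀,·), p(λ₀+δλ,·)) = 1 − (1/8) Σ_{μ,ν} ĝ_{μν} δλ_μ δλ_ν + o(‖δλ‖²)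 as δλ → 0. -/
open Filter Topology

open Asymptotics in

lemma sqrt_one_add_taylor :
    (fun u : ℝ => Real.sqrt (1 + u) - (1 + u / 2 - u ^ 2 / 8)) =o[𝓝 0] fun u => u ^ 2 := by
  have hev : (fun u : ℝ => (u ^ 3 / 8 - u ^ 4 / 64) / (Real.sqrt (1 + u) + (1 + u / 2 - u ^ 2 / 8)))
      =ᶠ[𝓝 0] (fun u : ℝ => Real.sqrt (1 + u) - (1 + u / 2 - u ^ 2 / 8)) := by
    have hb : ∀ᶠ u : ℝ in 𝓝 0, |u| < 1 / 2 := by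
      have := Metric.ball_mem_nhds (0 : ℝ) (by norm_num : (0:ℝ) < 1/2)
      filter_upwards [this] with u hu
      simpa [Real.dist_eq] using hu
    filter_upwards [hb] with u hu
    have h1 := abs_lt.mp hu
    have h1u : (0:ℝ) ≤ 1 + u := by linarith [h1.1]
    have hs : Real.sqrt (1 + u) ^ 2 = 1 + u := Real.sq_sqrt h1u
    have hs0 : 0 ≤ Real.sqrt (1 + u) := Real.sqrt_nonneg _
    have hd : 0 < Real.sqrt (1 + u) + (1 + u / 2 - u ^ 2 / 8) := by
      nlinarith [h1.1, h1.2]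
    rw [eq_comm, eq_div_iff hd.ne']
    linear_combination hs
  have hnum : (fun u : ℝ => u ^ 3 / 8 - u ^ 4 / 64) =o[𝓝 0] fun u => u ^ 2 := by
    have heq : (fun u : ℝ => u ^ 3 / 8 - u ^ 4 / 64) = fun u : ℝ => u ^ 2 * (u / 8 - u ^ 2 / 64) := by
      funext u; ring
    rw [heq]
    have hbig : (fun u : ℝ => u ^ 2) =O[𝓝 0] fun u : ℝ => u ^ 2 := isBigO_refl _ _
    have hlit : (fun u : ℝ => u / 8 - u ^ 2 / 64) =o[𝓝 0] fun _ => (1:ℝ) := by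
      rw [isLittleO_one_iff]
      have hc : Continuous (fun u : ℝ => u / 8 - u ^ 2 / 64) := by continuity
      have := hc.tendsto 0
      simpa using this
    simpa using hbig.mul_isLittleO hlit
  have hden : (fun u : ℝ => (Real.sqrt (1 + u) + (1 + u / 2 - u ^ 2 / 8))⁻¹) =O[𝓝 0] fun _ => (1:ℝ) := by
    have hc : Continuous (fun u : ℝ => Real.sqrt (1 + u) + (1 + u / 2 - u ^ 2 / 8)) := by
      continuity
    have ht : Tendsto (fun u : ℝ => (Real.sqrt (1 + u) + (1 + u / 2 - u ^ 2 / 8))⁻¹) (𝓝 0)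
        (𝓝 ((Real.sqrt (1 + 0) + (1 + 0 / 2 - (0:ℝ) ^ 2 / 8))⁻¹)) := by
      apply Tendsto.inv₀ (hc.tendsto 0)
      simp
    exact ht.isBigO_one ℝ
  have hfrac : (fun u : ℝ => (u ^ 3 / 8 - u ^ 4 / 64) / (Real.sqrt (1 + u) + (1 + u / 2 - u ^ 2 / 8)))
      =o[𝓝 0] fun u => u ^ 2 := by
    have := hnum.mul_isBigO hden
    simpa [div_eq_mul_inv] using this
  exact hfrac.congr' hev EventuallyEq.rfl


open Filter Topology Asymptotics in
private lemma classifim_step1 {Ω : Type*} {m : ℕ}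
    (p : (Fin m → ℝ) → Ω → ℝ)
    (lam0 : Fin m → ℝ)
    (L : (Fin m → ℝ) → Ω → (Fin m → ℝ))
    (h1 : ∀ᶠ dl in 𝓝 (0 : Fin m → ℝ), ∀ x : Ω,
      (1 + Real.exp (-(∑ i, dl i * L dl x i)))⁻¹ *
        (p (lam0 + dl / 2) x + p (lam0 - dl / 2) x) = p (lam0 + dl / 2) x)
    (h2 : ∀ x : Ω, ContinuousAt (fun dl => L dl x) 0)
    (h3 : ∀ x : Ω, DifferentiableAt ℝ (fun lam => p lam x) lam0) (x : Ω) :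
    (fun h : Fin m → ℝ => p (lam0 + h) x - p lam0 x - p lam0 x * ∑ i, h i * L 0 x i)
      =o[𝓝 0] fun h => ‖h‖ := by
  -- generic facts
  have hsmul : ∀ h : Fin m → ℝ, h / 2 = (2⁻¹ : ℝ) • h := by
    intro h; funext i; simp [div_eq_inv_mul]
  have hhalf : Tendsto (fun h : Fin m → ℝ => h / 2) (𝓝 0) (𝓝 0) := by
    have : Continuous (fun h : Fin m → ℝ => (2⁻¹ : ℝ) • h) := continuous_const_smul _
    have ht := this.tendsto 0
    simp only [smul_zero] at ht
    refine ht.congr ?_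
    intro h; rw [hsmul]
  have hneghalf : Tendsto (fun h : Fin m → ℝ => -(h / 2)) (𝓝 0) (𝓝 0) := by
    simpa using hhalf.neg
  have hhalfO : (fun h : Fin m → ℝ => ‖h / 2‖) =O[𝓝 0] fun h => ‖h‖ := by
    apply isBigO_of_le
    intro h
    simp only [norm_norm]
    rw [hsmul, norm_smul]
    have h0 := norm_nonneg h
    rw [norm_inv, Real.norm_ofNat]
    linarith
  have hco : ∀ i, (fun h : Fin m → ℝ => h i) =O[𝓝 0] fun h => ‖h‖ := fun i =>
    isBigO_of_le _ (fun h => by simpa using norm_le_pi_norm h i)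
  -- norm is o(1)
  have hnorm1 : (fun h : Fin m → ℝ => ‖h‖) =o[𝓝 0] fun _ => (1:ℝ) :=
    (isLittleO_one_iff ℝ).mpr tendsto_norm_zero
  -- ℓ and t
  have hte : (fun h : Fin m → ℝ => (∑ i, h i * L h x i) - ∑ i, h i * L 0 x i)
      =o[𝓝 0] fun h => ‖h‖ := by
    have heq : (fun h : Fin m → ℝ => (∑ i, h i * L h x i) - ∑ i, h i * L 0 x i)
        = fun h => ∑ i, h i * (L h x i - L 0 x i) := by
      funext h; rw [← Finset.sum_sub_distrib]; congr 1; funext i; ring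
    rw [heq]
    apply IsLittleO.fun_sum
    intro i _
    have hLi : Tendsto (fun h : Fin m → ℝ => L h x i - L 0 x i) (𝓝 0) (𝓝 0) := by
      have : Tendsto (fun h : Fin m → ℝ => L h x i) (𝓝 0) (𝓝 (L 0 x i)) :=
        ((continuous_apply i).continuousAt.comp (h2 x)).tendsto
      simpa using this.sub_const (L 0 x i)
    have := (hco i).mul_isLittleO ((isLittleO_one_iff ℝ).mpr hLi)
    simpa using this
  have hlO : (fun h : Fin m → ℝ => ∑ i, h i * L 0 x i) =O[𝓝 0] fun h => ‖h‖ := by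
    apply IsBigO.fun_sum
    intro i _
    have : (fun h : Fin m → ℝ => L 0 x i) =O[𝓝 0] fun _ => (1:ℝ) :=
      tendsto_const_nhds.isBigO_one ℝ
    simpa using (hco i).mul this
  have htO : (fun h : Fin m → ℝ => ∑ i, h i * L h x i) =O[𝓝 0] fun h => ‖h‖ := by
    have := hte.isBigO.add hlO
    simpa using this
  have ht0 : Tendsto (fun h : Fin m → ℝ => ∑ i, h i * L h x i) (𝓝 0) (𝓝 0) :=
    (isLittleO_one_iff ℝ).mp (htO.trans_isLittleO hnorm1)
  -- exp expansion
  have hE : (fun s : ℝ => Real.exp (-s) - (1 - s)) =o[𝓝 0] fun s => s := by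
    have hd : HasDerivAt (fun s : ℝ => Real.exp (-s)) (Real.exp (-0) * -1) 0 :=
      (Real.hasDerivAt_exp (-0)).comp 0 (hasDerivAt_neg 0)
    have := hasDerivAt_iff_isLittleO.mp hd
    simp only [neg_zero, Real.exp_zero, sub_zero, smul_eq_mul, mul_neg, mul_one] at this
    refine this.congr (fun s => ?_) (fun s => rfl)
    ring
  have hEt : (fun h : Fin m → ℝ => Real.exp (-(∑ i, h i * L h x i)) -
      (1 - ∑ i, h i * L h x i)) =o[𝓝 0] fun h => ‖h‖ := by
    have := hE.comp_tendsto ht0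
    simp only [Function.comp_def] at this
    exact this.trans_isBigO htO
  -- p near lam0
  have hq : Tendsto (fun h : Fin m → ℝ => p (lam0 + h / 2) x) (𝓝 0) (𝓝 (p lam0 x)) := by
    have hlam : Tendsto (fun h : Fin m → ℝ => lam0 + h / 2) (𝓝 0) (𝓝 lam0) := by
      have := (tendsto_const_nhds (x := lam0) (f := 𝓝 (0:Fin m → ℝ))).add hhalf
      simpa using this
    exact ((h3 x).continuousAt.tendsto).comp hlam
  have hqc : (fun h : Fin m → ℝ => p (lam0 + h / 2) x - p lam0 x) =o[𝓝 0] fun _ => (1:ℝ) := by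
    rw [isLittleO_one_iff]
    simpa using hq.sub_const (p lam0 x)
  have hqO : (fun h : Fin m → ℝ => p (lam0 + h / 2) x) =O[𝓝 0] fun _ => (1:ℝ) :=
    hq.isBigO_one ℝ
  -- derivative remainder
  set D := fderiv ℝ (fun lam => p lam x) lam0 with hDdef
  have hR : (fun k : Fin m → ℝ => p (lam0 + k) x - p lam0 x - D k) =o[𝓝 0] fun k => ‖k‖ :=
    (hasFDerivAt_iff_isLittleO_nhds_zero.mp (h3 x).hasFDerivAt).norm_right
  have hR4 : (fun h : Fin m → ℝ => p (lam0 + h / 2) x - p lam0 x - D (h / 2))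
      =o[𝓝 0] fun h => ‖h‖ := by
    have := hR.comp_tendsto hhalf
    simp only [Function.comp_def] at this
    exact this.trans_isBigO hhalfO
  have hR5 : (fun h : Fin m → ℝ => p (lam0 + -(h / 2)) x - p lam0 x - D (-(h / 2)))
      =o[𝓝 0] fun h => ‖h‖ := by
    have := hR.comp_tendsto hneghalf
    simp only [Function.comp_def] at this
    refine this.trans_isBigO (isBigO_of_le _ fun h => ?_)
    simp only [Function.comp, norm_norm, norm_neg]
    rw [hsmul, norm_smul, norm_inv, Real.norm_ofNat]
    linarith [norm_nonneg h]
  -- combo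
  have hT1 : (fun h : Fin m → ℝ => (p (lam0 + h / 2) x - p lam0 x) * ∑ i, h i * L h x i)
      =o[𝓝 0] fun h => ‖h‖ := by
    have := hqc.mul_isBigO htO
    simpa using this
  have hT2 : (fun h : Fin m → ℝ =>
      p lam0 x * ((∑ i, h i * L h x i) - ∑ i, h i * L 0 x i)) =o[𝓝 0] fun h => ‖h‖ :=
    hte.const_mul_left _
  have hT3 : (fun h : Fin m → ℝ => p (lam0 + h / 2) x *
      (Real.exp (-(∑ i, h i * L h x i)) - (1 - ∑ i, h i * L h x i))) =o[𝓝 0] fun h => ‖h‖ := by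
    have := hqO.mul_isLittleO hEt
    simpa using this
  have hcombo : (fun h : Fin m → ℝ =>
      (p (lam0 + h / 2) x - p lam0 x) * (∑ i, h i * L h x i)
      + p lam0 x * ((∑ i, h i * L h x i) - ∑ i, h i * L 0 x i)
      - p (lam0 + h / 2) x * (Real.exp (-(∑ i, h i * L h x i)) - (1 - ∑ i, h i * L h x i))
      - (p (lam0 + h / 2) x - p lam0 x - D (h / 2))
      + (p (lam0 + -(h / 2)) x - p lam0 x - D (-(h / 2)))) =o[𝓝 0] fun h => ‖h‖ :=
    (((hT1.add hT2).sub hT3).sub hR4).add hR5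
  have hkey : (fun h : Fin m → ℝ => D h - p lam0 x * ∑ i, h i * L 0 x i)
      =o[𝓝 0] fun h => ‖h‖ := by
    refine hcombo.congr' ?_ EventuallyEq.rfl
    filter_upwards [h1] with h hx
    have hbx := hx x
    have he : (0:ℝ) < 1 + Real.exp (-(∑ i, h i * L h x i)) := by positivity
    have hb : p (lam0 - h / 2) x
        = p (lam0 + h / 2) x * Real.exp (-(∑ i, h i * L h x i)) := by
      have h2' := congrArg (fun z => (1 + Real.exp (-(∑ i, h i * L h x i))) * z) hbx
      rw [← mul_assoc, mul_inv_cancel₀ he.ne', one_mul] at h2'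
      linear_combination h2'
    have hb' : p (lam0 + -(h / 2)) x
        = p (lam0 + h / 2) x * Real.exp (-(∑ i, h i * L h x i)) := by
      rw [← sub_eq_add_neg]; exact hb
    have hDn : D (-(h / 2)) = -D (h / 2) := map_neg D _
    have hD2 : D h = 2 * D (h / 2) := by
      have : D (h / 2) = 2⁻¹ * D h := by
        rw [hsmul, map_smul, smul_eq_mul]
      rw [this]; ring
    rw [hb', hDn, hD2]
    ring
  have := hR.add hkey
  refine this.congr (fun h => ?_) (fun h => rfl)
  ring

open Filter Topology Asymptotics in
private lemma classifim_ell_bigO {m : ℕ} (c : Fin m → ℝ) :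
    (fun h : Fin m → ℝ => ∑ i, h i * c i) =O[𝓝 0] fun h => ‖h‖ := by
  apply IsBigO.fun_sum
  intro i _
  have hco : (fun h : Fin m → ℝ => h i) =O[𝓝 0] fun h => ‖h‖ :=
    isBigO_of_le _ (fun h => by simpa using norm_le_pi_norm h i)
  have hc : (fun _ : Fin m → ℝ => c i) =O[𝓝 0] fun _ => (1:ℝ) :=
    tendsto_const_nhds.isBigO_one ℝ
  simpa using hco.mul hc

/-- Paper's Theorem 1: the output of an optimal binary classifier recovers the
Fisher Information Metric, defined as the second-order coefficient in the Taylor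
expansion of the classical fidelity. -/
theorem classifim_fim_from_optimal_classifier
    {Ω : Type*} [Fintype Ω] [Nonempty Ω] {m : ℕ}
    (p : (Fin m → ℝ) → Ω → ℝ)
    (hpos : ∀ lam x, 0 ≤ p lam x)
    (hsum : ∀ lam, ∑ x, p lam x = 1)
    (lam0 : Fin m → ℝ)
    (L : (Fin m → ℝ) → Ω → (Fin m → ℝ))
    (h1 : ∀ᶠ dl in 𝓝 (0 : Fin m → ℝ), ∀ x : Ω,
      (1 + Real.exp (-(∑ i, dl i * L dl x i)))⁻¹ *
        (p (lam0 + dl / 2) x + p (lam0 - dl / 2) x) = p (lam0 + dl / 2) x)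
    (h2 : ∀ x : Ω, ContinuousAt (fun dl => L dl x) 0)
    (h3 : ∀ x : Ω, DifferentiableAt ℝ (fun lam => p lam x) lam0)
    (h4 : ∀ x : Ω, p lam0 x = 0 →
      (fun dl : Fin m → ℝ => p (lam0 + dl) x) =o[𝓝 0] fun dl => ‖dl‖ ^ 2) :
    (fun dl : Fin m → ℝ =>
        (∑ x, Real.sqrt (p lam0 x * p (lam0 + dl) x)) -
          (1 - (1 / 8) * ∑ μ, ∑ ν,
            (∑ x, p lam0 x * L 0 x μ * L 0 x ν) * dl μ * dl ν))
      =o[𝓝 0] fun dl => ‖dl‖ ^ 2 := by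
  have step1 := fun x => classifim_step1 p lam0 L h1 h2 h3 x
  have hlO : ∀ x : Ω, (fun h : Fin m → ℝ => ∑ i, h i * L 0 x i) =O[𝓝 0] fun h => ‖h‖ :=
    fun x => classifim_ell_bigO (L 0 x)
  have hnorm1 : (fun h : Fin m → ℝ => ‖h‖) =o[𝓝 0] fun _ => (1:ℝ) :=
    (Asymptotics.isLittleO_one_iff ℝ).mpr tendsto_norm_zero
  have step2 : ∀ x : Ω, (fun h : Fin m → ℝ =>
      Real.sqrt (p lam0 x * p (lam0 + h) x) - p lam0 x
      - (p (lam0 + h) x - p lam0 x) / 2 + p lam0 x * (∑ i, h i * L 0 x i) ^ 2 / 8)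
      =o[𝓝 0] fun h => ‖h‖ ^ 2 := by
    intro x
    rcases eq_or_lt_of_le (hpos lam0 x) with hP | hP
    · have hP' := hP.symm
      have := (h4 x hP').const_mul_left (-(1/2) : ℝ)
      refine this.congr (fun h => ?_) (fun h => rfl)
      rw [hP']
      simp
      ring
    · have hAne : p lam0 x ≠ 0 := hP.ne'
      have hqA : (fun h : Fin m → ℝ => p (lam0 + h) x - p lam0 x) =O[𝓝 0] fun h => ‖h‖ := by
        have heq : (fun h : Fin m → ℝ => p (lam0 + h) x - p lam0 x)
            = fun h => (p (lam0 + h) x - p lam0 x - p lam0 x * ∑ i, h i * L 0 x i)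
              + p lam0 x * ∑ i, h i * L 0 x i := by
          funext h; ring
        rw [heq]
        exact (step1 x).isBigO.add ((hlO x).const_mul_left (p lam0 x))
      have hu : (fun h : Fin m → ℝ => (p (lam0 + h) x - p lam0 x) / p lam0 x)
          =O[𝓝 0] fun h => ‖h‖ := by
        have := hqA.const_mul_left (p lam0 x)⁻¹
        refine this.congr (fun h => ?_) (fun h => rfl)
        rw [div_eq_inv_mul]
      have hu0 : Tendsto (fun h : Fin m → ℝ => (p (lam0 + h) x - p lam0 x) / p lam0 x)
          (𝓝 0) (𝓝 0) :=
        (Asymptotics.isLittleO_one_iff ℝ).mp (hu.trans_isLittleO hnorm1)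
      have hG : (fun h : Fin m → ℝ =>
          Real.sqrt (1 + (p (lam0 + h) x - p lam0 x) / p lam0 x)
          - (1 + ((p (lam0 + h) x - p lam0 x) / p lam0 x) / 2
            - ((p (lam0 + h) x - p lam0 x) / p lam0 x) ^ 2 / 8))
          =o[𝓝 0] fun h => ‖h‖ ^ 2 := by
        have := sqrt_one_add_taylor.comp_tendsto hu0
        simp only [Function.comp_def] at this
        exact this.trans_isBigO (hu.pow 2)
      have hdiff : (fun h : Fin m → ℝ =>
          (p (lam0 + h) x - p lam0 x) / p lam0 x - ∑ i, h i * L 0 x i)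
          =o[𝓝 0] fun h => ‖h‖ := by
        have := (step1 x).const_mul_left (p lam0 x)⁻¹
        refine this.congr (fun h => ?_) (fun h => rfl)
        field_simp
      have hplus : (fun h : Fin m → ℝ =>
          (p (lam0 + h) x - p lam0 x) / p lam0 x + ∑ i, h i * L 0 x i)
          =O[𝓝 0] fun h => ‖h‖ := hu.add (hlO x)
      have hSq : (fun h : Fin m → ℝ =>
          ((p (lam0 + h) x - p lam0 x) / p lam0 x) ^ 2 - (∑ i, h i * L 0 x i) ^ 2)
          =o[𝓝 0] fun h => ‖h‖ ^ 2 := by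
        have := hdiff.mul_isBigO hplus
        refine this.congr (fun h => by ring) (fun h => (pow_two ‖h‖).symm)
      have final := (hG.const_mul_left (p lam0 x)).sub (hSq.const_mul_left (p lam0 x / 8))
      refine final.congr (fun h => ?_) (fun h => rfl)
      have hq0 := hpos (lam0 + h) x
      set u := (p (lam0 + h) x - p lam0 x) / p lam0 x with hu_def
      have hqu : p (lam0 + h) x = p lam0 x + p lam0 x * u := by
        rw [hu_def]; field_simp; ring
      have hAq : p lam0 x * p (lam0 + h) x = (p lam0 x) ^ 2 * (1 + u) := by
        rw [hqu]; ring
      have hsqrt : Real.sqrt (p lam0 x * p (lam0 + h) x)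
          = p lam0 x * Real.sqrt (1 + u) := by
        rw [hAq, Real.sqrt_mul (sq_nonneg _), Real.sqrt_sq hP.le]
      rw [hsqrt, hqu]
      ring
  have hsumS := Asymptotics.IsLittleO.fun_sum (fun x (_ : x ∈ Finset.univ) => step2 x)
  refine hsumS.congr (fun h => ?_) (fun h => rfl)
  have e1 := hsum lam0
  have e2 := hsum (lam0 + h)
  have hswap : ∑ μ, ∑ ν, (∑ x, p lam0 x * L 0 x μ * L 0 x ν) * h μ * h ν
      = ∑ x, p lam0 x * (∑ i, h i * L 0 x i) ^ 2 := by
    have hflip : ∀ μ ν, (∑ x, p lam0 x * L 0 x μ * L 0 x ν) * h μ * h ν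
        = ∑ x, p lam0 x * (h μ * L 0 x μ) * (h ν * L 0 x ν) := by
      intro μ ν; rw [Finset.sum_mul, Finset.sum_mul]
      apply Finset.sum_congr rfl; intros; ring
    calc ∑ μ, ∑ ν, (∑ x, p lam0 x * L 0 x μ * L 0 x ν) * h μ * h ν
        = ∑ μ, ∑ ν, ∑ x, p lam0 x * (h μ * L 0 x μ) * (h ν * L 0 x ν) := by
          apply Finset.sum_congr rfl; intro μ _
          apply Finset.sum_congr rfl; intro ν _
          exact hflip μ ν
      _ = ∑ μ, ∑ x, ∑ ν, p lam0 x * (h μ * L 0 x μ) * (h ν * L 0 x ν) := by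
          apply Finset.sum_congr rfl; intro μ _
          exact Finset.sum_comm
      _ = ∑ x, ∑ μ, ∑ ν, p lam0 x * (h μ * L 0 x μ) * (h ν * L 0 x ν) := Finset.sum_comm
      _ = ∑ x, p lam0 x * (∑ i, h i * L 0 x i) ^ 2 := by
          apply Finset.sum_congr rfl; intro x _
          rw [pow_two, Finset.sum_mul_sum, Finset.mul_sum]
          apply Finset.sum_congr rfl; intro μ _
          rw [Finset.mul_sum]
          apply Finset.sum_congr rfl; intro ν _
          ring
  rw [Finset.sum_add_distrib, Finset.sum_sub_distrib, Finset.sum_sub_distrib,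
    ← Finset.sum_div, ← Finset.sum_div, Finset.sum_sub_distrib, e1, e2, hswap]
  ring
end

section
/- Let Ω be a nonempty finite set and let p : ℝ^m → Ω → ℝ be a family of probability mass functions. Fix λ₀ ∈ ℝ^m and a function L : ℝ^m × Ω → ℝ^m satisfying: (1) for every δλ in some neighborhood of 0 and every x ∈ Ω, (1 + exp(−δλ·L(δλ,x)))⁻¹ · (p(λ₀ + δλ/2, x) + p(λ₀ − δλ/2, x)) = p(λ₀ + δλ/2, x); (2) for each x the map δλ ↦ L(δλ,x) is continuous at 0; (3) for each x the map λ ↦ p(λ,x) is differentiable at λ₀; (4) for each x with p(λ₀,x) = 0 one has p(λ₀ + δλ, x) = o(‖δλ‖²) as δλ → 0. Then for every fixed vector v ∈ ℝ^m, lim_{ε→0, ε≠0} (8/ε²) · (1 − Σ_{x∈Ω} √(p(λ₀,x) · p(λ₀ + εv, x))) = Σ_{μ,ν} v_μ v_ν · Σ_{x∈Ω} p(λ₀,x) · L(0,x)_μ · L(0,x)_ν. -/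
open Filter Topology

set_option maxHeartbeats 1000000 in
/-- The core directional-limit claim (eq. proof2) in the proof of the paper's Theorem 1. -/
theorem classifim_directional_limit
    {Ω : Type*} [Fintype Ω] [Nonempty Ω] {m : ℕ}
    (p : (Fin m → ℝ) → Ω → ℝ)
    (hpos : ∀ lam x, 0 ≤ p lam x)
    (hsum : ∀ lam, ∑ x, p lam x = 1)
    (lam0 : Fin m → ℝ)
    (L : (Fin m → ℝ) → Ω → (Fin m → ℝ))
    (h1 : ∀ᶠ dl in 𝓝 (0 : Fin m → ℝ), ∀ x : Ω,
      (1 + Real.exp (-(∑ i, dl i * L dl x i)))⁻¹ *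
        (p (lam0 + dl / 2) x + p (lam0 - dl / 2) x) = p (lam0 + dl / 2) x)
    (h2 : ∀ x : Ω, ContinuousAt (fun dl => L dl x) 0)
    (h3 : ∀ x : Ω, DifferentiableAt ℝ (fun lam => p lam x) lam0)
    (h4 : ∀ x : Ω, p lam0 x = 0 →
      (fun dl : Fin m → ℝ => p (lam0 + dl) x) =o[𝓝 0] fun dl => ‖dl‖ ^ 2)
    (v : Fin m → ℝ) :
    Tendsto (fun ε : ℝ =>
        (8 / ε ^ 2) * (1 - ∑ x, Real.sqrt (p lam0 x * p (lam0 + ε • v) x)))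
      (𝓝[≠] 0)
      (𝓝 (∑ μ, ∑ ν, v μ * v ν * ∑ x, p lam0 x * L 0 x μ * L 0 x ν)) := by
  classical
  set q : Ω → ℝ → ℝ := fun x ε => p (lam0 + ε • v) x with hq_def
  set S : Ω → ℝ := fun x => ∑ i, v i * L 0 x i with hS_def
  set g : Ω → ℝ := fun x => fderiv ℝ (fun lam => p lam x) lam0 v with hg_def
  -- inner curve derivative
  have hiv : HasDerivAt (fun ε : ℝ => lam0 + ε • v) v 0 := by
    have h0 : HasDerivAt (fun ε : ℝ => ε • v) ((1:ℝ) • v) 0 :=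
      (hasDerivAt_id (0:ℝ)).smul_const v
    simpa using h0.const_add lam0
  have hqd : ∀ x, HasDerivAt (q x) (g x) 0 := by
    intro x
    have hF : HasFDerivAt (fun lam => p lam x) (fderiv ℝ (fun lam => p lam x) lam0)
        ((fun ε : ℝ => lam0 + ε • v) 0) := by
      simpa using (h3 x).hasFDerivAt
    simpa [q, g, Function.comp_def] using hF.comp_hasDerivAt 0 hiv
  have hq0 : ∀ x, q x 0 = p lam0 x := by intro x; simp [q]
  -- step 0 : rewrite h1 into exponential form
  have hstep0 : ∀ᶠ dl in 𝓝 (0 : Fin m → ℝ), ∀ x : Ω,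
      p (lam0 - dl / 2) x = p (lam0 + dl / 2) x * Real.exp (-(∑ i, dl i * L dl x i)) := by
    filter_upwards [h1] with dl hdl x
    have h := hdl x
    set t := ∑ i, dl i * L dl x i with ht
    set a := p (lam0 + dl / 2) x
    set b := p (lam0 - dl / 2) x
    have hne : (1 + Real.exp (-t)) ≠ 0 := by positivity
    have h' : (1 + Real.exp (-t)) * ((1 + Real.exp (-t))⁻¹ * (a + b))
        = (1 + Real.exp (-t)) * a := by rw [h]
    rw [← mul_assoc, mul_inv_cancel₀ hne, one_mul] at h'
    linear_combination h'
  -- key identity g x = p lam0 x * S x for p lam0 x ≠ 0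
  have hkey : ∀ x, p lam0 x ≠ 0 → g x = p lam0 x * S x := by
    intro x hx
    set c : ℝ → ℝ := fun ε => ∑ i, v i * L ((2*ε) • v) x i with hc_def
    have h2v : Tendsto (fun ε : ℝ => (2*ε) • v) (𝓝 (0:ℝ)) (𝓝 0) := by
      have : Continuous (fun ε : ℝ => (2*ε) • v) := by continuity
      simpa using this.tendsto 0
    have hcc : Tendsto c (𝓝 (0:ℝ)) (𝓝 (S x)) := by
      have hLx : Tendsto (fun ε : ℝ => L ((2*ε) • v) x) (𝓝 0) (𝓝 (L 0 x)) :=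
        (h2 x).tendsto.comp h2v
      have hsum' : Continuous (fun w : Fin m → ℝ => ∑ i, v i * w i) := by continuity
      have := (hsum'.tendsto (L 0 x)).comp hLx
      simpa [c, S, Function.comp_def] using this
    have hev : ∀ᶠ ε : ℝ in 𝓝 (0:ℝ), q x (-ε) = q x ε * Real.exp (-(2*ε*c ε)) := by
      filter_upwards [h2v.eventually hstep0] with ε hε
      have h := hε x
      have e1 : lam0 - ((2*ε) • v) / 2 = lam0 + (-ε) • v := by
        funext i; simp [Pi.smul_apply]; ring
      have e2 : lam0 + ((2*ε) • v) / 2 = lam0 + ε • v := by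
        funext i; simp [Pi.smul_apply]; ring
      have e3 : (∑ i, ((2*ε) • v) i * L ((2*ε) • v) x i) = 2*ε*c ε := by
        simp only [hc_def, Finset.mul_sum, Pi.smul_apply, smul_eq_mul]
        exact Finset.sum_congr rfl (fun i _ => by ring)
      rw [e1, e2, e3] at h
      simpa [q] using h
    -- limit A : symmetric difference quotient tends to 2 * g x
    have hslope := hasDerivAt_iff_tendsto_slope.mp (hqd x)
    have hslope' : Tendsto (fun ε : ℝ => (q x ε - q x 0)/ε) (𝓝[≠] (0:ℝ)) (𝓝 (g x)) := by
      refine hslope.congr (fun ε => ?_)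
      simp [slope_def_field]
    have hneg : Tendsto (fun ε : ℝ => -ε) (𝓝[≠] (0:ℝ)) (𝓝[≠] (0:ℝ)) := by
      rw [tendsto_nhdsWithin_iff]
      constructor
      · have := (continuous_neg.tendsto (0:ℝ))
        simpa using this.mono_left nhdsWithin_le_nhds
      · filter_upwards [self_mem_nhdsWithin] with ε (hε : ε ≠ 0)
        simpa using hε
    have hslopeN : Tendsto (fun ε : ℝ => (q x (-ε) - q x 0)/(-ε)) (𝓝[≠] (0:ℝ)) (𝓝 (g x)) :=
      hslope'.comp hneg
    have hA : Tendsto (fun ε : ℝ => (q x ε - q x (-ε))/ε) (𝓝[≠] (0:ℝ)) (𝓝 (2 * g x)) := by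
      have h' := hslope'.add hslopeN
      have h'' : Tendsto (fun ε : ℝ => (q x ε - q x 0)/ε + (q x (-ε) - q x 0)/(-ε))
          (𝓝[≠] (0:ℝ)) (𝓝 (2 * g x)) := by
        rw [show (2:ℝ) * g x = g x + g x from by ring]
        exact h'
      refine h''.congr (fun ε => ?_)
      by_cases hε : ε = 0
      · simp [hε]
      · have key : ∀ (A B C e : ℝ), e ≠ 0 → (A - B)/e + (C - B)/(-e) = (A - C)/e := by
          intro A B C e he
          rw [div_neg, ← sub_eq_add_neg, div_sub_div_same]
          congr 1; ring
        exact key _ _ _ ε hε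
    -- limit B : via the exponential relation
    have hqc : Tendsto (q x) (𝓝 (0:ℝ)) (𝓝 (p lam0 x)) := by
      have := (hqd x).continuousAt.tendsto
      rwa [hq0 x] at this
    have hbd1 : ∀ᶠ ε : ℝ in 𝓝 (0:ℝ), |c ε| ≤ |S x| + 1 := by
      filter_upwards [hcc (Metric.ball_mem_nhds (S x) one_pos)] with ε hε
      have hlt : |c ε - S x| < 1 := by simpa [Real.dist_eq] using hε
      calc |c ε| = |S x + (c ε - S x)| := by ring_nf
        _ ≤ |S x| + |c ε - S x| := abs_add_le _ _
        _ ≤ |S x| + 1 := by linarith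
    have htc : Tendsto (fun ε : ℝ => 2*ε*c ε) (𝓝 (0:ℝ)) (𝓝 0) := by
      have := ((tendsto_id (α := ℝ)).const_mul 2).mul hcc
      simpa using this.mono_left (le_refl (𝓝 (0:ℝ)))
    have hsmall : ∀ᶠ ε : ℝ in 𝓝 (0:ℝ), |2*ε*c ε| ≤ 1 := by
      filter_upwards [htc (Metric.ball_mem_nhds 0 one_pos)] with ε hε
      have h6 := mem_ball_zero_iff.mp hε
      rw [Real.norm_eq_abs] at h6
      linarith
    have hE : Tendsto (fun ε : ℝ => (1 - Real.exp (-(2*ε*c ε)))/ε - 2 * c ε)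
        (𝓝[≠] (0:ℝ)) (𝓝 0) := by
      refine squeeze_zero_norm' (a := fun ε : ℝ => 4 * |ε| * (|S x| + 1)^2) ?_ ?_
      · filter_upwards [hbd1.filter_mono nhdsWithin_le_nhds,
          hsmall.filter_mono nhdsWithin_le_nhds, self_mem_nhdsWithin]
          with ε h1b h2b hεne
        have hεne' : (ε:ℝ) ≠ 0 := hεne
        set t := 2*ε*c ε with htdef
        have hexp : |Real.exp (-t) - 1 - (-t)| ≤ (-t)^2 :=
          Real.abs_exp_sub_one_sub_id_le (by simpa using h2b)
        have heq : (1 - Real.exp (-t))/ε - 2 * c ε = -((Real.exp (-t) - 1 - (-t))/ε) := by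
          have key : ∀ (E C e : ℝ), e ≠ 0 → (1 - E)/e - 2*C = -((E - 1 - -(2*e*C))/e) := by
            intro E C e he; field_simp; ring
          rw [htdef]; exact key _ _ _ hεne'
        rw [heq, norm_neg, norm_div, Real.norm_eq_abs, Real.norm_eq_abs]
        have h5 : |Real.exp (-t) - 1 - (-t)| / |ε| ≤ (-t)^2 / |ε| := by
          gcongr
        refine h5.trans ?_
        have ht2 : (-t)^2 = 4 * ε^2 * (c ε)^2 := by rw [htdef]; ring
        rw [ht2]
        rw [div_le_iff₀ (by positivity : (0:ℝ) < |ε|)]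
        have hc2 : (c ε)^2 ≤ (|S x| + 1)^2 := by
          have := sq_abs (c ε)
          nlinarith [abs_nonneg (c ε), abs_nonneg (S x)]
        nlinarith [sq_abs ε, abs_nonneg ε, sq_nonneg (c ε), abs_nonneg (S x)]
      · have : Tendsto (fun ε : ℝ => 4 * |ε| * (|S x| + 1)^2) (𝓝 (0:ℝ)) (𝓝 0) := by
          have h0 : Tendsto (fun ε : ℝ => |ε|) (𝓝 (0:ℝ)) (𝓝 0) := by
            simpa using (continuous_abs.tendsto (0:ℝ))
          have := (h0.const_mul 4).mul_const ((|S x| + 1)^2)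
          simpa [mul_comm, mul_assoc] using this
        exact this.mono_left nhdsWithin_le_nhds
    have h2c : Tendsto (fun ε : ℝ => (1 - Real.exp (-(2*ε*c ε)))/ε) (𝓝[≠] (0:ℝ))
        (𝓝 (2 * S x)) := by
      have := hE.add ((hcc.const_mul 2).mono_left nhdsWithin_le_nhds)
      simpa using this
    have hB : Tendsto (fun ε : ℝ => q x ε * ((1 - Real.exp (-(2*ε*c ε)))/ε))
        (𝓝[≠] (0:ℝ)) (𝓝 (p lam0 x * (2 * S x))) :=
      (hqc.mono_left nhdsWithin_le_nhds).mul h2c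
    have hAB : Tendsto (fun ε : ℝ => (q x ε - q x (-ε))/ε) (𝓝[≠] (0:ℝ))
        (𝓝 (p lam0 x * (2 * S x))) := by
      refine hB.congr' ?_
      filter_upwards [hev.filter_mono nhdsWithin_le_nhds] with ε hε
      rw [hε]; ring
    have huniq := tendsto_nhds_unique hA hAB
    linear_combination huniq / 2
  -- per-point limit
  have hper : ∀ x : Ω, Tendsto
      (fun ε : ℝ => 4 * (Real.sqrt (q x ε) - Real.sqrt (p lam0 x))^2 / ε^2)
      (𝓝[≠] (0:ℝ)) (𝓝 (p lam0 x * (S x)^2)) := by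
    intro x
    by_cases hx : p lam0 x = 0
    · rw [hx]
      simp only [Real.sqrt_zero, sub_zero, zero_mul]
      have hcomp : Tendsto (fun ε : ℝ => ε • v) (𝓝 (0:ℝ)) (𝓝 0) := by
        have : Continuous (fun ε : ℝ => ε • v) := by continuity
        simpa using this.tendsto 0
      have hlo : (fun ε : ℝ => q x ε) =o[𝓝 (0:ℝ)] fun ε => ε^2 := by
        have h4' := (h4 x hx).comp_tendsto hcomp
        refine h4'.trans_isBigO ?_
        have hco : ((fun dl : Fin m → ℝ => ‖dl‖^2) ∘ fun ε : ℝ => ε • v)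
            = fun ε : ℝ => ‖v‖^2 * ε^2 := by
          funext ε
          simp only [Function.comp_apply, norm_smul, Real.norm_eq_abs, mul_pow, sq_abs]
          ring
        rw [hco]
        exact (Asymptotics.isBigO_refl (fun ε : ℝ => ε^2) (𝓝 0)).const_mul_left _
      have hdiv := hlo.tendsto_div_nhds_zero
      have : Tendsto (fun ε : ℝ => 4 * (q x ε / ε^2)) (𝓝 (0:ℝ)) (𝓝 0) := by
        simpa using hdiv.const_mul 4
      refine (this.mono_left nhdsWithin_le_nhds).congr (fun ε => ?_)
      rw [Real.sq_sqrt (hpos _ x)]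
      ring
    · have hx' : q x 0 ≠ 0 := by rw [hq0 x]; exact hx
      have hd : HasDerivAt (fun ε : ℝ => Real.sqrt (q x ε))
          (1/(2*Real.sqrt (q x 0)) * g x) 0 :=
        (Real.hasDerivAt_sqrt hx').comp 0 (hqd x)
      have hslope := hasDerivAt_iff_tendsto_slope.mp hd
      have hslope' : Tendsto (fun ε : ℝ => (Real.sqrt (q x ε) - Real.sqrt (p lam0 x))/ε)
          (𝓝[≠] (0:ℝ)) (𝓝 (1/(2*Real.sqrt (p lam0 x)) * g x)) := by
        rw [← hq0 x]
        refine hslope.congr (fun ε => ?_)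
        simp [slope_def_field]
      have hsq : Tendsto (fun ε : ℝ =>
            4 * ((Real.sqrt (q x ε) - Real.sqrt (p lam0 x))/ε)^2)
          (𝓝[≠] (0:ℝ)) (𝓝 (4 * (1/(2*Real.sqrt (p lam0 x)) * g x)^2)) :=
        ((hslope'.pow 2).const_mul 4)
      have hval : 4 * (1/(2*Real.sqrt (p lam0 x)) * g x)^2 = p lam0 x * (S x)^2 := by
        have hgx := hkey x hx
        have hsqrt : Real.sqrt (p lam0 x) ^ 2 = p lam0 x := Real.sq_sqrt (hpos lam0 x)
        have hsne : Real.sqrt (p lam0 x) ≠ 0 := by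
          intro h0
          rw [h0] at hsqrt
          simp at hsqrt
          exact hx hsqrt.symm
        rw [hgx]
        field_simp
        linear_combination (-4 * S x ^ 2) * hsqrt
      rw [← hval]
      refine hsq.congr (fun ε => ?_)
      rw [div_pow]
      ring
  -- global identity
  have hEq : ∀ ε : ℝ,
      (8 / ε ^ 2) * (1 - ∑ x, Real.sqrt (p lam0 x * p (lam0 + ε • v) x))
      = ∑ x, 4 * (Real.sqrt (q x ε) - Real.sqrt (p lam0 x))^2 / ε^2 := by
    intro ε
    have hsq : ∀ x : Ω, (Real.sqrt (q x ε) - Real.sqrt (p lam0 x))^2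
        = q x ε + p lam0 x - 2 * Real.sqrt (p lam0 x * q x ε) := by
      intro x
      have e1 := Real.sq_sqrt (hpos (lam0 + ε • v) x)
      have e2 := Real.sq_sqrt (hpos lam0 x)
      have e3 : Real.sqrt (p lam0 x * q x ε)
          = Real.sqrt (p lam0 x) * Real.sqrt (q x ε) := Real.sqrt_mul (hpos lam0 x) _
      have e1' : Real.sqrt (q x ε) ^ 2 = q x ε := e1
      rw [e3]
      nlinarith [e1', e2]
    have hsum1 : ∑ x, q x ε = 1 := hsum _
    have hsum2 : (∑ x : Ω, p lam0 x) = 1 := hsum _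
    have hsplit : ∑ x, (Real.sqrt (q x ε) - Real.sqrt (p lam0 x))^2
        = 2 - 2 * ∑ x, Real.sqrt (p lam0 x * q x ε) := by
      rw [Finset.sum_congr rfl (fun x _ => hsq x)]
      rw [Finset.sum_sub_distrib, Finset.sum_add_distrib, hsum1, hsum2, ← Finset.mul_sum]
      ring
    have : ∑ x, 4 * (Real.sqrt (q x ε) - Real.sqrt (p lam0 x))^2 / ε^2
        = (4/ε^2) * ∑ x, (Real.sqrt (q x ε) - Real.sqrt (p lam0 x))^2 := by
      rw [Finset.mul_sum]
      exact Finset.sum_congr rfl (fun x _ => by ring)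
    rw [this, hsplit]
    ring
  -- final sum manipulation
  have hfinal : (∑ x, p lam0 x * (S x)^2)
      = ∑ μ, ∑ ν, v μ * v ν * ∑ x, p lam0 x * L 0 x μ * L 0 x ν := by
    have hterm : ∀ x : Ω, p lam0 x * (S x)^2
        = ∑ μ, ∑ ν, v μ * v ν * (p lam0 x * L 0 x μ * L 0 x ν) := by
      intro x
      calc p lam0 x * (S x)^2
          = p lam0 x * ∑ μ, ∑ ν, (v μ * L 0 x μ) * (v ν * L 0 x ν) := by
            simp only [hS_def, sq]
            rw [Finset.sum_mul_sum]
        _ = ∑ μ, ∑ ν, v μ * v ν * (p lam0 x * L 0 x μ * L 0 x ν) := by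
            rw [Finset.mul_sum]
            refine Finset.sum_congr rfl fun μ _ => ?_
            rw [Finset.mul_sum]
            exact Finset.sum_congr rfl fun ν _ => by ring
    calc (∑ x, p lam0 x * (S x)^2)
        = ∑ x, ∑ μ, ∑ ν, v μ * v ν * (p lam0 x * L 0 x μ * L 0 x ν) :=
          Finset.sum_congr rfl (fun x _ => hterm x)
      _ = ∑ μ, ∑ x, ∑ ν, v μ * v ν * (p lam0 x * L 0 x μ * L 0 x ν) :=
          Finset.sum_comm
      _ = ∑ μ, ∑ ν, ∑ x : Ω, v μ * v ν * (p lam0 x * L 0 x μ * L 0 x ν) :=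
          Finset.sum_congr rfl (fun μ _ => Finset.sum_comm)
      _ = ∑ μ, ∑ ν, v μ * v ν * ∑ x, p lam0 x * L 0 x μ * L 0 x ν := by
          refine Finset.sum_congr rfl (fun μ _ => Finset.sum_congr rfl (fun ν _ => ?_))
          rw [Finset.mul_sum]
  have hT : Tendsto (fun ε : ℝ => ∑ x, 4 * (Real.sqrt (q x ε) - Real.sqrt (p lam0 x))^2 / ε^2)
      (𝓝[≠] (0:ℝ)) (𝓝 (∑ x, p lam0 x * (S x)^2)) :=
    tendsto_finset_sum _ (fun x _ => hper x)
  rw [← hfinal]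
  exact hT.congr (fun ε => (hEq ε).symm)
end

section
/- Let Ω be a nonempty finite set and let p : ℝ^m → Ω → ℝ be a family of probability mass functions such that: (3) for each x ∈ Ω the map λ ↦ p(λ,x) is differentiable at λ₀; and (4) for each x ∈ Ω with p(λ₀,x) = 0 one has p(λ₀ + δλ, x) = o(‖δλ‖²) as δλ → 0. Fix v ∈ ℝ^m and for t ∈ ℝ and ε ≠ 0 define f_t(ε) = (8/ε²) · (1 − Σ_{x∈Ω} √( p(λ₀ + v·ε·(t − 1/2), x) · p(λ₀ + v·ε·(t + 1/2), x) )). Then lim_{ε→0, ε≠0} ( f_{1/2}(ε) − f₀(ε) ) = 0. -/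
open Filter Topology

lemma sum_sqrt_eq {Ω : Type*} [Fintype Ω] (a b : Ω → ℝ)
    (ha : ∀ x, 0 ≤ a x) (hb : ∀ x, 0 ≤ b x)
    (hsa : ∑ x, a x = 1) (hsb : ∑ x, b x = 1) :
    1 - ∑ x, Real.sqrt (a x * b x)
      = (∑ x, (Real.sqrt (a x) - Real.sqrt (b x)) ^ 2) / 2 := by
  have h : ∀ x, (Real.sqrt (a x) - Real.sqrt (b x)) ^ 2
      = a x + b x - 2 * Real.sqrt (a x * b x) := by
    intro x
    rw [sub_sq, Real.sq_sqrt (ha x), Real.sq_sqrt (hb x), Real.sqrt_mul (ha x)]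
    ring
  simp_rw [h]
  rw [Finset.sum_sub_distrib, Finset.sum_add_distrib, hsa, hsb, ← Finset.mul_sum]
  ring

lemma half_tendsto : Tendsto (fun ε : ℝ => ε / 2) (𝓝[≠] (0:ℝ)) (𝓝[≠] (0:ℝ)) := by
  apply tendsto_nhdsWithin_of_tendsto_nhds_of_eventually_within
  · have : Tendsto (fun ε : ℝ => ε / 2) (𝓝 (0:ℝ)) (𝓝 (0/2 : ℝ)) :=
      tendsto_id.div_const 2
    simpa using this.mono_left nhdsWithin_le_nhds
  · filter_upwards [eventually_mem_nhdsWithin] with ε hε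
    simp only [Set.mem_compl_iff, Set.mem_singleton_iff] at hε ⊢
    exact div_ne_zero hε two_ne_zero

lemma neg_half_tendsto : Tendsto (fun ε : ℝ => -(ε / 2)) (𝓝[≠] (0:ℝ)) (𝓝[≠] (0:ℝ)) := by
  apply tendsto_nhdsWithin_of_tendsto_nhds_of_eventually_within
  · have : Tendsto (fun ε : ℝ => -(ε / 2)) (𝓝 (0:ℝ)) (𝓝 (-(0/2) : ℝ)) :=
      (tendsto_id.div_const 2).neg
    simpa using this.mono_left nhdsWithin_le_nhds
  · filter_upwards [eventually_mem_nhdsWithin] with ε hε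
    simp only [Set.mem_compl_iff, Set.mem_singleton_iff] at hε ⊢
    exact neg_ne_zero.mpr (div_ne_zero hε two_ne_zero)

lemma term_tendsto (g : ℝ → ℝ) (d : ℝ)
    (hL : Tendsto (fun ε => (g ε - g 0) / ε) (𝓝[≠] (0:ℝ)) (𝓝 d)) :
    Tendsto (fun ε => (4 / ε ^ 2) * ((g ε - g 0) ^ 2 - (g (ε / 2) - g (-(ε / 2))) ^ 2))
      (𝓝[≠] (0:ℝ)) (𝓝 0) := by
  have hS : Tendsto (fun ε => (g (ε / 2) - g (-(ε / 2))) / ε) (𝓝[≠] (0:ℝ)) (𝓝 d) := by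
    have h1 := hL.comp half_tendsto
    have h2 := hL.comp neg_half_tendsto
    have h := ((h1.add h2).div_const 2)
    have hd : (d + d) / 2 = d := by ring
    rw [hd] at h
    refine h.congr' ?_
    filter_upwards [eventually_mem_nhdsWithin] with ε hε
    have hε' : ε ≠ 0 := hε
    simp only [Function.comp]
    have h2 : ε / 2 ≠ 0 := div_ne_zero hε' two_ne_zero
    have hn : -(ε / 2) ≠ 0 := neg_ne_zero.mpr h2
    rw [div_add_div _ _ h2 hn, div_div, div_eq_div_iff (by
      simp only [ne_eq, mul_eq_zero, not_or]
      exact ⟨⟨h2, hn⟩, two_ne_zero⟩) hε']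
    ring
  have hmain : Tendsto
      (fun ε => 4 * (((g ε - g 0) / ε) ^ 2 - ((g (ε / 2) - g (-(ε / 2))) / ε) ^ 2))
      (𝓝[≠] (0:ℝ)) (𝓝 (4 * (d ^ 2 - d ^ 2))) :=
    (((hL.pow 2).sub (hS.pow 2)).const_mul 4)
  have h0 : (4 : ℝ) * (d ^ 2 - d ^ 2) = 0 := by ring
  rw [h0] at hmain
  refine hmain.congr' ?_
  filter_upwards [eventually_mem_nhdsWithin] with ε hε
  have hε' : ε ≠ 0 := hε
  field_simp

/-- The symmetrization step in the proof of the paper's Theorem 1: the one-sided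
fidelity deficit `f_{1/2}` and its symmetric version `f₀` agree to `o(1)` as `ε → 0`. -/
theorem fidelity_deficit_symmetrization
    {Ω : Type*} [Fintype Ω] [Nonempty Ω] {m : ℕ}
    (p : (Fin m → ℝ) → Ω → ℝ)
    (hpos : ∀ lam x, 0 ≤ p lam x)
    (hsum : ∀ lam, ∑ x, p lam x = 1)
    (lam0 : Fin m → ℝ)
    (h3 : ∀ x : Ω, DifferentiableAt ℝ (fun lam => p lam x) lam0)
    (h4 : ∀ x : Ω, p lam0 x = 0 →
      (fun dl : Fin m → ℝ => p (lam0 + dl) x) =o[𝓝 0] fun dl => ‖dl‖ ^ 2)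
    (v : Fin m → ℝ)
    (f : ℝ → ℝ → ℝ)
    (hf : ∀ t ε, f t ε = (8 / ε ^ 2) *
      (1 - ∑ x, Real.sqrt
        (p (lam0 + (ε * (t - 1 / 2)) • v) x * p (lam0 + (ε * (t + 1 / 2)) • v) x))) :
    Tendsto (fun ε : ℝ => f (1 / 2) ε - f 0 ε) (𝓝[≠] 0) (𝓝 0) := by
  classical
  set g : Ω → ℝ → ℝ := fun x s => Real.sqrt (p (lam0 + s • v) x) with hgdef
  have h00 : ∀ x : Ω, g x 0 = Real.sqrt (p lam0 x) := by
    intro x; simp [hgdef]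
  -- the slope of g x at 0 has a limit
  have hslope : ∀ x : Ω, ∃ d : ℝ,
      Tendsto (fun ε => (g x ε - g x 0) / ε) (𝓝[≠] (0:ℝ)) (𝓝 d) := by
    intro x
    by_cases hx : p lam0 x = 0
    · -- degenerate case: use h4
      refine ⟨0, ?_⟩
      have hcomp : Tendsto (fun s : ℝ => s • v) (𝓝 0) (𝓝 0) := by
        have : Continuous fun s : ℝ => s • v := continuous_id.smul continuous_const
        simpa using this.tendsto 0
      have ho : (fun s : ℝ => p (lam0 + s • v) x) =o[𝓝 0] fun s : ℝ => ‖s • v‖ ^ 2 :=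
        (h4 x hx).comp_tendsto hcomp
      have ho2 : (fun s : ℝ => p (lam0 + s • v) x) =o[𝓝 0] fun s : ℝ => s ^ 2 := by
        refine ho.trans_isBigO (Asymptotics.IsBigO.of_bound (‖v‖ ^ 2) ?_)
        filter_upwards with s
        rw [Real.norm_of_nonneg (by positivity), Real.norm_of_nonneg (by positivity),
          norm_smul, Real.norm_eq_abs, mul_pow, sq_abs]
        ring_nf
        exact le_refl _
      have hdiv : Tendsto (fun s : ℝ => p (lam0 + s • v) x / s ^ 2) (𝓝 0) (𝓝 0) :=
        ho2.tendsto_div_nhds_zero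
      have hsq : Tendsto (fun s : ℝ => Real.sqrt (p (lam0 + s • v) x / s ^ 2))
          (𝓝[≠] (0:ℝ)) (𝓝 0) := by
        have := (Real.continuous_sqrt.tendsto 0).comp hdiv
        rw [Real.sqrt_zero] at this
        exact this.mono_left nhdsWithin_le_nhds
      rw [tendsto_zero_iff_norm_tendsto_zero]
      refine hsq.congr' ?_
      filter_upwards [eventually_mem_nhdsWithin] with s hs
      have hs' : (s:ℝ) ≠ 0 := hs
      have hg0 : g x 0 = 0 := by rw [h00 x, hx, Real.sqrt_zero]
      rw [hg0, sub_zero, Real.norm_eq_abs, abs_div,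
        abs_of_nonneg (by simp only [hgdef]; exact Real.sqrt_nonneg _),
        ← Real.sqrt_sq_eq_abs, hgdef, Real.sqrt_div (hpos _ x)]
    · -- nondegenerate case: g x is differentiable at 0
      have hφ : DifferentiableAt ℝ (fun s : ℝ => lam0 + s • v) 0 :=
        (differentiableAt_const _).add (differentiableAt_id.smul_const v)
      have h0' : (fun s : ℝ => lam0 + s • v) 0 = lam0 := by simp
      have hq : DifferentiableAt ℝ (fun s : ℝ => p (lam0 + s • v) x) 0 := by
        have := DifferentiableAt.comp (g := fun lam => p lam x)
          (f := fun s : ℝ => lam0 + s • v) 0 (by simpa using h3 x) hφ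
        exact this
      have hq0 : p (lam0 + (0:ℝ) • v) x ≠ 0 := by simpa using hx
      have hgd : DifferentiableAt ℝ (g x) 0 := by
        simp only [hgdef]
        exact hq.sqrt hq0
      refine ⟨deriv (g x) 0, ?_⟩
      have := hasDerivAt_iff_tendsto_slope.mp hgd.hasDerivAt
      refine this.congr fun ε => ?_
      simp [slope_def_field]
  have hterm : ∀ x : Ω, Tendsto
      (fun ε => (4 / ε ^ 2) * ((g x ε - g x 0) ^ 2 - (g x (ε / 2) - g x (-(ε / 2))) ^ 2))
      (𝓝[≠] (0:ℝ)) (𝓝 0) := by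
    intro x
    obtain ⟨d, hL⟩ := hslope x
    exact term_tendsto (g x) d hL
  have hsum' : Tendsto
      (fun ε => ∑ x : Ω, (4 / ε ^ 2) *
        ((g x ε - g x 0) ^ 2 - (g x (ε / 2) - g x (-(ε / 2))) ^ 2))
      (𝓝[≠] (0:ℝ)) (𝓝 0) := by
    have := tendsto_finset_sum Finset.univ (fun x _ => hterm x)
    simpa using this
  refine hsum'.congr' ?_
  filter_upwards [eventually_mem_nhdsWithin] with ε hε
  have hε' : (ε:ℝ) ≠ 0 := hε
  rw [hf, hf]
  have e1 : ε * ((1:ℝ) / 2 - 1 / 2) = 0 := by ring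
  have e2 : ε * ((1:ℝ) / 2 + 1 / 2) = ε := by ring
  have e3 : ε * ((0:ℝ) - 1 / 2) = -(ε / 2) := by ring
  have e4 : ε * ((0:ℝ) + 1 / 2) = ε / 2 := by ring
  rw [e1, e2, e3, e4]
  rw [sum_sqrt_eq (fun x => p (lam0 + (0:ℝ) • v) x) (fun x => p (lam0 + ε • v) x)
      (fun x => hpos _ x) (fun x => hpos _ x) (hsum _) (hsum _),
    sum_sqrt_eq (fun x => p (lam0 + (-(ε / 2)) • v) x) (fun x => p (lam0 + (ε / 2) • v) x)
      (fun x => hpos _ x) (fun x => hpos _ x) (hsum _) (hsum _)]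
  simp only [hgdef]
  rw [Finset.sum_div, Finset.sum_div, Finset.mul_sum, Finset.mul_sum,
    ← Finset.sum_sub_distrib]
  refine Finset.sum_congr rfl fun x _ => ?_
  field_simp
  ring
end

section
/- Let Ω be a nonempty finite set and let p : ℝ^m → Ω → ℝ be a family of probability mass functions such that p(λ₀,x) > 0 for every x ∈ Ω and, for each x ∈ Ω, the map λ ↦ p(λ,x) is differentiable at λ₀. Define the score s_μ(x) = ∂_{λ_μ}[ ln p(λ,x) ]|_{λ=λ₀} and the Fisher Information Metric g_{μν} = Σ_{x∈Ω} p(λ₀,x) · s_μ(x) · s_ν(x). Then the classical fidelity satisfies Σ_{x∈Ω} √( p(λ₀,x) · p(λ₀+δλ,x) ) = 1 − (1/8) Σ_{μ,ν} g_{μν} δλ_μ δλ_ν + o(‖δλ‖²) as δλ → 0. -/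
open Filter Topology Asymptotics

/-- Strictly positive special case of the paper's Theorem 1: the second-order Taylor
coefficient of the classical fidelity is the Fisher Information Metric. -/
theorem fidelity_taylor_fim
    {Ω : Type*} [Fintype Ω] [Nonempty Ω] {m : ℕ}
    (p : (Fin m → ℝ) → Ω → ℝ)
    (hpos : ∀ lam x, 0 ≤ p lam x)
    (hsum : ∀ lam, ∑ x, p lam x = 1)
    (lam0 : Fin m → ℝ)
    (hpos0 : ∀ x, 0 < p lam0 x)
    (hdiff : ∀ x : Ω, DifferentiableAt ℝ (fun lam => p lam x) lam0)
    (s : Fin m → Ω → ℝ)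
    (hs : ∀ μ x, s μ x = fderiv ℝ (fun lam => Real.log (p lam x)) lam0 (Pi.single μ 1))
    (g : Fin m → Fin m → ℝ)
    (hg : ∀ μ ν, g μ ν = ∑ x, p lam0 x * s μ x * s ν x) :
    (fun dl : Fin m → ℝ =>
        (∑ x, Real.sqrt (p lam0 x * p (lam0 + dl) x)) -
          (1 - (1 / 8) * ∑ μ, ∑ ν, g μ ν * dl μ * dl ν))
      =o[𝓝 0] fun dl => ‖dl‖ ^ 2 := by
  classical
  have hP : ∀ x, (0:ℝ) < p lam0 x := hpos0
  set L : Ω → (Fin m → ℝ) →L[ℝ] ℝ := fun x => fderiv ℝ (fun lam => p lam x) lam0 with hLdef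
  have hL : ∀ x, HasFDerivAt (fun lam => p lam x) (L x) lam0 := fun x => (hdiff x).hasFDerivAt
  have htrans : ∀ x, HasFDerivAt (fun dl : Fin m → ℝ => p (lam0 + dl) x) (L x) 0 := by
    intro x
    have h1 : HasFDerivAt (fun dl : Fin m → ℝ => lam0 + dl)
        (ContinuousLinearMap.id ℝ (Fin m → ℝ)) 0 := by
      simpa using (hasFDerivAt_id (𝕜 := ℝ) (0 : Fin m → ℝ)).const_add lam0
    have h2 : HasFDerivAt (fun lam => p lam x) (L x) (lam0 + 0) := by simpa using hL x
    exact h2.comp (0 : Fin m → ℝ) h1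
  set D : Ω → (Fin m → ℝ) →L[ℝ] ℝ :=
    fun x => (1/(2*Real.sqrt (p lam0 x))) • L x with hDdef
  have hφ : ∀ x, HasFDerivAt (fun dl : Fin m → ℝ => Real.sqrt (p (lam0 + dl) x)) (D x) 0 := by
    intro x
    have h2 := (htrans x).sqrt (by simpa using (hP x).ne')
    simp only [add_zero] at h2
    exact h2
  set ρ : Ω → (Fin m → ℝ) → ℝ :=
    fun x dl => Real.sqrt (p (lam0 + dl) x) - Real.sqrt (p lam0 x) - D x dl with hρdef
  have hρo : ∀ x, (fun dl => ρ x dl) =o[𝓝 (0 : Fin m → ℝ)] fun dl => ‖dl‖ := by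
    intro x
    have h := (hφ x).isLittleO
    simp only [sub_zero, add_zero] at h
    exact h.norm_right
  -- relation between L and s
  have hLs : ∀ x μ, L x (Pi.single μ 1) = p lam0 x * s μ x := by
    intro x μ
    have hlog : HasFDerivAt (fun lam => Real.log (p lam x)) ((p lam0 x)⁻¹ • L x) lam0 :=
      (hL x).log (hP x).ne'
    rw [hs, hlog.fderiv]
    simp only [ContinuousLinearMap.coe_smul', Pi.smul_apply, smul_eq_mul]
    exact (mul_inv_cancel_left₀ (hP x).ne' _).symm
  have hLdl : ∀ x (dl : Fin m → ℝ), L x dl = p lam0 x * ∑ μ, dl μ * s μ x := by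
    intro x dl
    have hdl : dl = ∑ μ, dl μ • (Pi.single μ 1 : Fin m → ℝ) := by
      funext j
      simp [Pi.single_apply]
    conv_lhs => rw [hdl]
    rw [map_sum, Finset.mul_sum]
    refine Finset.sum_congr rfl fun μ _ => ?_
    rw [map_smul, smul_eq_mul, hLs]
    ring
  have hDdl : ∀ x (dl : Fin m → ℝ),
      D x dl = Real.sqrt (p lam0 x) * (∑ μ, dl μ * s μ x) / 2 := by
    intro x dl
    have ha : Real.sqrt (p lam0 x) ≠ 0 := (Real.sqrt_pos.mpr (hP x)).ne'
    have hsq : Real.sqrt (p lam0 x) ^ 2 = p lam0 x := Real.sq_sqrt (hP x).le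
    rw [hDdef]
    simp only [ContinuousLinearMap.coe_smul', Pi.smul_apply, smul_eq_mul]
    rw [hLdl, ← hsq]
    field_simp
    rw [Real.sq_sqrt (sq_nonneg (Real.sqrt (p lam0 x)))]
  -- per-point algebraic identity
  have key : ∀ (dl : Fin m → ℝ) x,
      Real.sqrt (p lam0 x * p (lam0 + dl) x)
        = p lam0 x + (p (lam0 + dl) x - p lam0 x)/2 - (D x dl)^2/2
          + (-(D x dl * ρ x dl) - (1/2)*(ρ x dl * ρ x dl)) := by
    intro dl x
    have hq0 : 0 ≤ p (lam0 + dl) x := hpos (lam0 + dl) x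
    have ha2 : Real.sqrt (p lam0 x) ^ 2 = p lam0 x := Real.sq_sqrt (hP x).le
    have hsq : Real.sqrt (p (lam0 + dl) x)
        = Real.sqrt (p lam0 x) + D x dl + ρ x dl := by
      rw [hρdef]; ring
    have hq : p (lam0 + dl) x
        = (Real.sqrt (p lam0 x) + D x dl + ρ x dl)^2 := by
      rw [← hsq, Real.sq_sqrt hq0]
    rw [Real.sqrt_mul (hP x).le, hsq, hq]
    linear_combination (1/2 : ℝ) * ha2
  -- the FIM quadratic form
  have hgsum : ∀ dl : Fin m → ℝ,
      ∑ μ, ∑ ν, g μ ν * dl μ * dl ν = ∑ x, p lam0 x * (∑ μ, dl μ * s μ x)^2 := by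
    intro dl
    have hx : ∀ x, p lam0 x * (∑ μ, dl μ * s μ x)^2
        = ∑ μ, ∑ ν, p lam0 x * s μ x * s ν x * dl μ * dl ν := by
      intro x
      rw [sq, Finset.sum_mul_sum, Finset.mul_sum]
      refine Finset.sum_congr rfl fun μ _ => ?_
      rw [Finset.mul_sum]
      exact Finset.sum_congr rfl fun ν _ => by ring
    simp only [hx]
    refine Eq.symm ?_
    calc ∑ x, ∑ μ, ∑ ν, p lam0 x * s μ x * s ν x * dl μ * dl ν
        = ∑ μ, ∑ x, ∑ ν, p lam0 x * s μ x * s ν x * dl μ * dl ν := Finset.sum_comm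
      _ = ∑ μ, ∑ ν, ∑ x, p lam0 x * s μ x * s ν x * dl μ * dl ν :=
          Finset.sum_congr rfl fun μ _ => Finset.sum_comm
      _ = ∑ μ, ∑ ν, g μ ν * dl μ * dl ν := by
          refine Finset.sum_congr rfl fun μ _ => Finset.sum_congr rfl fun ν _ => ?_
          rw [hg, Finset.sum_mul, Finset.sum_mul]
  -- main pointwise identity for the goal function
  have main : ∀ dl : Fin m → ℝ,
      (∑ x, Real.sqrt (p lam0 x * p (lam0 + dl) x)) -
          (1 - (1 / 8) * ∑ μ, ∑ ν, g μ ν * dl μ * dl ν)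
        = ∑ x, (-(D x dl * ρ x dl) - (1/2)*(ρ x dl * ρ x dl)) := by
    intro dl
    have h1 : ∑ x, Real.sqrt (p lam0 x * p (lam0 + dl) x)
        = ∑ x, (p lam0 x + (p (lam0 + dl) x - p lam0 x)/2 - (D x dl)^2/2
            + (-(D x dl * ρ x dl) - (1/2)*(ρ x dl * ρ x dl))) :=
      Finset.sum_congr rfl fun x _ => key dl x
    have h2 : ∑ x, (D x dl)^2 = (1/4) * ∑ μ, ∑ ν, g μ ν * dl μ * dl ν := by
      rw [hgsum, Finset.mul_sum]
      refine Finset.sum_congr rfl fun x _ => ?_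
      rw [hDdl]
      have ha2 : Real.sqrt (p lam0 x) ^ 2 = p lam0 x := Real.sq_sqrt (hP x).le
      linear_combination ((∑ μ, dl μ * s μ x)^2/4) * ha2
    have e1 : ∑ x, p lam0 x = 1 := hsum lam0
    have e2 : ∑ x, p (lam0 + dl) x = 1 := hsum (lam0 + dl)
    have e3 : ∑ x, (p (lam0 + dl) x - p lam0 x) = 0 := by
      rw [Finset.sum_sub_distrib, e1, e2]; ring
    rw [h1]
    have expand : ∑ x, (p lam0 x + (p (lam0 + dl) x - p lam0 x)/2 - (D x dl)^2/2
            + (-(D x dl * ρ x dl) - (1/2)*(ρ x dl * ρ x dl)))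
        = (∑ x, p lam0 x) + (∑ x, (p (lam0 + dl) x - p lam0 x))/2 - (∑ x, (D x dl)^2)/2
            + ∑ x, (-(D x dl * ρ x dl) - (1/2)*(ρ x dl * ρ x dl)) := by
      rw [Finset.sum_add_distrib, Finset.sum_sub_distrib, Finset.sum_add_distrib,
        ← Finset.sum_div, ← Finset.sum_div]
    rw [expand, e1, e3, h2]
    ring
  have hfun : (fun dl : Fin m → ℝ =>
        (∑ x, Real.sqrt (p lam0 x * p (lam0 + dl) x)) -
          (1 - (1 / 8) * ∑ μ, ∑ ν, g μ ν * dl μ * dl ν))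
      = fun dl => ∑ x, (-(D x dl * ρ x dl) - (1/2)*(ρ x dl * ρ x dl)) := funext main
  rw [hfun]
  have hnorm2 : (fun dl : Fin m → ℝ => ‖dl‖ ^ 2) = fun dl => ‖dl‖ * ‖dl‖ := by
    funext dl; ring
  rw [hnorm2]
  refine Asymptotics.IsLittleO.fun_sum fun x _ => ?_
  have hb : (fun dl : Fin m → ℝ => D x dl) =O[𝓝 0] fun dl => ‖dl‖ :=
    ((D x).isBigO_id _).norm_right
  have hc := hρo x
  have t1 : (fun dl => D x dl * ρ x dl) =o[𝓝 (0 : Fin m → ℝ)] fun dl => ‖dl‖ * ‖dl‖ :=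
    hb.mul_isLittleO hc
  have t2 : (fun dl => ρ x dl * ρ x dl) =o[𝓝 (0 : Fin m → ℝ)] fun dl => ‖dl‖ * ‖dl‖ :=
    hc.isBigO.mul_isLittleO hc
  exact t1.neg_left.sub (t2.const_mul_left (1/2))
end

section
/- Let Ω be a nonempty finite set and let p : ℝ → Ω → ℝ be a family of probability mass functions parameterized by a single real parameter λ, such that p(0,x) > 0 for every x ∈ Ω and, for each x ∈ Ω, the map λ ↦ p(λ,x) is differentiable at λ = 0. Let s(x) = (d/dλ)[ ln p(λ,x) ]|_{λ=0} and g(0) = Σ_{x∈Ω} p(0,x) · s(x)². Then lim_{ε→0⁺} (1/(4ε²)) · Σ_{x∈Ω} p(0,x) · ( ln( p(ε,x) / p(−ε,x) ) )² = g(0). -/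
open Filter Topology

/-- The one-dimensional ClassiFIM idea: the mean square of the log odds
`ln(P_ε(x)/P_{−ε}(x))` divided by `4ε²` converges to the FIM at `λ = 0`. -/
theorem classifim_one_dim
    {Ω : Type*} [Fintype Ω] [Nonempty Ω]
    (p : ℝ → Ω → ℝ)
    (hpos : ∀ lam x, 0 ≤ p lam x)
    (hsum : ∀ lam, ∑ x, p lam x = 1)
    (hpos0 : ∀ x, 0 < p 0 x)
    (hdiff : ∀ x : Ω, DifferentiableAt ℝ (fun lam => p lam x) 0)
    (s : Ω → ℝ)
    (hs : ∀ x, s x = deriv (fun lam => Real.log (p lam x)) 0)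
    (g0 : ℝ) (hg0 : g0 = ∑ x, p 0 x * s x ^ 2) :
    Tendsto (fun ε : ℝ =>
        (1 / (4 * ε ^ 2)) * ∑ x, p 0 x * (Real.log (p ε x / p (-ε) x)) ^ 2)
      (𝓝[>] 0) (𝓝 g0) := by
  set L : Ω → ℝ → ℝ := fun x lam => Real.log (p lam x) with hLdef
  have hL : ∀ x, HasDerivAt (L x) (s x) 0 := by
    intro x
    have h1 : DifferentiableAt ℝ (L x) 0 :=
      by have := (Real.differentiableAt_log (ne_of_gt (hpos0 x))).comp (0:ℝ) (hdiff x); exact this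
    rw [hs x]
    exact h1.hasDerivAt
  have hne : Tendsto (fun ε : ℝ => ε) (𝓝[>] (0:ℝ)) (𝓝[≠] (0:ℝ)) :=
    tendsto_nhdsWithin_mono_left (fun y hy => ne_of_gt hy) tendsto_id
  have hneg : Tendsto (fun ε : ℝ => -ε) (𝓝[>] (0:ℝ)) (𝓝[≠] (0:ℝ)) := by
    rw [tendsto_nhdsWithin_iff]
    constructor
    · have : Tendsto (fun ε : ℝ => -ε) (𝓝 (0:ℝ)) (𝓝 (-(0:ℝ))) := tendsto_neg 0
      simpa using this.mono_left nhdsWithin_le_nhds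
    · filter_upwards [self_mem_nhdsWithin] with ε (hε : 0 < ε)
      exact neg_ne_zero.mpr (ne_of_gt hε)
  have hslope : ∀ x, Tendsto (fun ε : ℝ => (L x ε - L x (-ε)) / (2*ε))
      (𝓝[>] (0:ℝ)) (𝓝 (s x)) := by
    intro x
    have h := hasDerivAt_iff_tendsto_slope.mp (hL x)
    have h1 : Tendsto (fun ε : ℝ => (L x ε - L x 0) / ε) (𝓝[>] (0:ℝ)) (𝓝 (s x)) := by
      have := h.comp hne
      refine this.congr fun ε => ?_
      simp [slope_def_field, Function.comp]
    have h2 : Tendsto (fun ε : ℝ => (L x 0 - L x (-ε)) / ε) (𝓝[>] (0:ℝ)) (𝓝 (s x)) := by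
      have := h.comp hneg
      refine this.congr fun ε => ?_
      simp only [slope_def_field, Function.comp]
      rw [sub_zero, div_neg, ← neg_div]
      ring_nf
    have h3 := (h1.add h2).div_const 2
    have : (s x + s x) / 2 = s x := by ring
    rw [this] at h3
    refine h3.congr fun ε => ?_
    field_simp
    ring
  have hmain : Tendsto (fun ε : ℝ => ∑ x, p 0 x * ((L x ε - L x (-ε)) / (2*ε)) ^ 2)
      (𝓝[>] (0:ℝ)) (𝓝 g0) := by
    rw [hg0]
    exact tendsto_finset_sum _ fun x _ =>
      (tendsto_const_nhds.mul ((hslope x).pow 2))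
  refine hmain.congr' ?_
  -- eventual positivity
  have hev : ∀ᶠ lam in 𝓝 (0:ℝ), ∀ x, 0 < p lam x := by
    rw [eventually_all]
    intro x
    exact (hdiff x).continuousAt.eventually (eventually_gt_nhds (hpos0 x))
  have hev1 : ∀ᶠ ε in 𝓝[>] (0:ℝ), ∀ x, 0 < p ε x :=
    nhdsWithin_le_nhds hev
  have hev2 : ∀ᶠ ε in 𝓝[>] (0:ℝ), ∀ x, 0 < p (-ε) x := by
    have : Tendsto (fun ε : ℝ => -ε) (𝓝[>] (0:ℝ)) (𝓝 (0:ℝ)) := by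
      have : Tendsto (fun ε : ℝ => -ε) (𝓝 (0:ℝ)) (𝓝 (-(0:ℝ))) := tendsto_neg 0
      simpa using this.mono_left nhdsWithin_le_nhds
    exact this.eventually hev
  filter_upwards [hev1, hev2, self_mem_nhdsWithin] with ε h1 h2 (hε : 0 < ε)
  rw [Finset.mul_sum]
  refine Finset.sum_congr rfl fun x _ => ?_
  rw [hLdef]
  simp only
  rw [Real.log_div (ne_of_gt (h1 x)) (ne_of_gt (h2 x))]
  have hε' : ε ≠ 0 := ne_of_gt hε
  rw [div_pow, show ((2:ℝ)*ε)^2 = 4*ε^2 by ring, div_eq_mul_inv, one_div, mul_comm]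
  ring
end

section
/- Let Ω be a nonempty finite set and p a probability mass function on Ω. Let X₁, …, X_N, Y₁, …, Y_N be 2N mutually independent Ω-valued random variables, each with distribution p. For x ∈ Ω set N_x = #{ i ∈ {1,…,N} : X_i = x } and M_x = #{ i ∈ {1,…,N} : Y_i = x }. Then E[ Σ_{x∈Ω} √( N_x · M_x ) ] ≤ N² · Σ_{x∈Ω} p(x)². -/
open MeasureTheory

/-- Bound on the expected empirical fidelity between two independent empirical samples
from the same distribution: `E[Σ_x √(N_x · M_x)] ≤ N² Σ_x p(x)²`. -/
theorem expected_empirical_fidelity_bound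
    {Ω : Type*} [Fintype Ω] [Nonempty Ω] [DecidableEq Ω] [MeasurableSpace Ω] [MeasurableSingletonClass Ω]
    (p : Ω → ℝ) (hp : ∀ x, 0 ≤ p x) (hpsum : ∑ x, p x = 1)
    {Ω' : Type*} [MeasurableSpace Ω'] (μ : Measure Ω') [IsProbabilityMeasure μ]
    (N : ℕ) (hN : 0 < N)
    (Z : Fin N ⊕ Fin N → Ω' → Ω)
    (hmeas : ∀ i, Measurable (Z i))
    (hindep : ProbabilityTheory.iIndepFun Z μ)
    (hdist : ∀ i x, (μ (Z i ⁻¹' {x})).toReal = p x) :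
    ∫ ω, ∑ x : Ω, Real.sqrt
        (((Finset.univ.filter fun i => Z (Sum.inl i) ω = x).card : ℝ) *
          ((Finset.univ.filter fun i => Z (Sum.inr i) ω = x).card : ℝ)) ∂μ
      ≤ (N : ℝ) ^ 2 * ∑ x, p x ^ 2 := by
  classical
  set f : (Fin N ⊕ Fin N) → Ω → Ω' → ℝ := fun i x ω => if Z i ω = x then 1 else 0 with hf
  have hfind : ∀ i x, f i x = (Z i ⁻¹' {x}).indicator (fun _ => (1:ℝ)) := by
    intro i x
    funext ω
    simp [f, Set.indicator_apply, Set.mem_preimage]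
  have hfmeas : ∀ i x, Measurable (f i x) := by
    intro i x
    rw [hfind]
    exact measurable_const.indicator (hmeas i (measurableSet_singleton x))
  have hfint : ∀ i x, Integrable (f i x) μ := by
    intro i x
    rw [hfind]
    exact (integrable_const (1:ℝ)).indicator (hmeas i (measurableSet_singleton x))
  have hfintegral : ∀ i x, ∫ ω, f i x ω ∂μ = p x := by
    intro i x
    rw [hfind, integral_indicator_const _ (hmeas i (measurableSet_singleton x))]
    simp [hdist i x]
    exact hdist i x
  -- the product term integral
  have hprod : ∀ (i j : Fin N) (x : Ω),
      ∫ ω, f (Sum.inl i) x ω * f (Sum.inr j) x ω ∂μ = p x * p x := by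
    intro i j x
    have hij : (Sum.inl i : Fin N ⊕ Fin N) ≠ Sum.inr j := by simp
    have hIndepZ := hindep.indepFun hij
    have hg : Measurable (fun y : Ω => if y = x then (1:ℝ) else 0) := by
      have : (fun y : Ω => if y = x then (1:ℝ) else 0)
          = ({x} : Set Ω).indicator (fun _ => (1:ℝ)) := by
        funext y; simp [Set.indicator_apply]
      rw [this]
      exact measurable_const.indicator (measurableSet_singleton x)
    have hIndep : ProbabilityTheory.IndepFun (f (Sum.inl i) x) (f (Sum.inr j) x) μ := by
      have := hIndepZ.comp hg hg
      exact this
    have hmul := hIndep.integral_mul_eq_mul_integral (hfmeas (Sum.inl i) x).aestronglyMeasurable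
      (hfmeas (Sum.inr j) x).aestronglyMeasurable
    calc ∫ ω, f (Sum.inl i) x ω * f (Sum.inr j) x ω ∂μ
        = ∫ ω, (f (Sum.inl i) x * f (Sum.inr j) x) ω ∂μ := rfl
      _ = (∫ ω, f (Sum.inl i) x ω ∂μ) * (∫ ω, f (Sum.inr j) x ω ∂μ) := hmul
      _ = p x * p x := by rw [hfintegral, hfintegral]
  -- counting functions as sums of indicators
  have hcardl : ∀ (ω : Ω') (x : Ω),
      ((Finset.univ.filter fun i => Z (Sum.inl i) ω = x).card : ℝ)
        = ∑ i : Fin N, f (Sum.inl i) x ω := by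
    intro ω x
    rw [Finset.card_filter]
    push_cast
    simp [f]
  have hcardr : ∀ (ω : Ω') (x : Ω),
      ((Finset.univ.filter fun i => Z (Sum.inr i) ω = x).card : ℝ)
        = ∑ i : Fin N, f (Sum.inr i) x ω := by
    intro ω x
    rw [Finset.card_filter]
    push_cast
    simp [f]
  -- pointwise sqrt bound
  have hsqrt : ∀ (n m : ℕ), Real.sqrt ((n : ℝ) * m) ≤ (n : ℝ) * m := by
    intro n m
    rw [Real.sqrt_le_iff]
    refine ⟨by positivity, ?_⟩
    have h2 : (n * m : ℕ) ≤ (n * m) ^ 2 := Nat.le_self_pow two_ne_zero _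
    have h3 : ((n * m : ℕ) : ℝ) ≤ (((n * m) ^ 2 : ℕ) : ℝ) := by exact_mod_cast h2
    push_cast at h3
    nlinarith [h3]
  -- integrability of the RHS-style integrand (product of counts, as triple sum)
  have hprodint : ∀ (i j : Fin N) (x : Ω),
      Integrable (fun ω => f (Sum.inl i) x ω * f (Sum.inr j) x ω) μ := by
    intro i j x
    refine Integrable.mono' (integrable_const (1:ℝ))
      ((hfmeas _ x).mul (hfmeas _ x)).aestronglyMeasurable (ae_of_all _ fun ω => ?_)
    simp only [f, Real.norm_eq_abs]
    split <;> split <;> norm_num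
  have hGint : Integrable (fun ω => ∑ x : Ω, ∑ i : Fin N, ∑ j : Fin N,
      f (Sum.inl i) x ω * f (Sum.inr j) x ω) μ := by
    apply integrable_finset_sum
    intro x _
    apply integrable_finset_sum
    intro i _
    exact integrable_finset_sum _ fun j _ => hprodint i j x
  -- integrability of the LHS integrand
  have hFmeas : Measurable (fun ω => ∑ x : Ω, Real.sqrt
      (((Finset.univ.filter fun i => Z (Sum.inl i) ω = x).card : ℝ) *
        ((Finset.univ.filter fun i => Z (Sum.inr i) ω = x).card : ℝ))) := by
    apply Finset.measurable_sum
    intro x _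
    apply Measurable.sqrt
    have h1 : Measurable (fun ω => ((Finset.univ.filter fun i => Z (Sum.inl i) ω = x).card : ℝ)) := by
      simp only [hcardl]
      exact Finset.measurable_sum _ fun i _ => hfmeas (Sum.inl i) x
    have h2 : Measurable (fun ω => ((Finset.univ.filter fun i => Z (Sum.inr i) ω = x).card : ℝ)) := by
      simp only [hcardr]
      exact Finset.measurable_sum _ fun i _ => hfmeas (Sum.inr i) x
    exact h1.mul h2
  have hFint : Integrable (fun ω => ∑ x : Ω, Real.sqrt
      (((Finset.univ.filter fun i => Z (Sum.inl i) ω = x).card : ℝ) *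
        ((Finset.univ.filter fun i => Z (Sum.inr i) ω = x).card : ℝ))) μ := by
    refine Integrable.mono' (integrable_const ((Fintype.card Ω : ℝ) * N))
      hFmeas.aestronglyMeasurable (ae_of_all _ fun ω => ?_)
    rw [Real.norm_eq_abs, abs_of_nonneg (Finset.sum_nonneg fun x _ => Real.sqrt_nonneg _)]
    calc ∑ x : Ω, Real.sqrt
          (((Finset.univ.filter fun i => Z (Sum.inl i) ω = x).card : ℝ) *
            ((Finset.univ.filter fun i => Z (Sum.inr i) ω = x).card : ℝ))
        ≤ ∑ _x : Ω, (N : ℝ) := by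
          apply Finset.sum_le_sum
          intro x _
          rw [Real.sqrt_le_iff]
          refine ⟨by positivity, ?_⟩
          have h1 : ((Finset.univ.filter fun i => Z (Sum.inl i) ω = x).card : ℝ) ≤ N := by
            exact_mod_cast Finset.card_filter_le _ _ |>.trans (by simp)
          have h2 : ((Finset.univ.filter fun i => Z (Sum.inr i) ω = x).card : ℝ) ≤ N := by
            exact_mod_cast Finset.card_filter_le _ _ |>.trans (by simp)
          have h1' : (0:ℝ) ≤ ((Finset.univ.filter fun i => Z (Sum.inl i) ω = x).card : ℝ) := by positivity
          have h2' : (0:ℝ) ≤ ((Finset.univ.filter fun i => Z (Sum.inr i) ω = x).card : ℝ) := by positivity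
          nlinarith
      _ = (Fintype.card Ω : ℝ) * N := by simp [Finset.sum_const, Finset.card_univ, mul_comm]
  -- main chain
  have hmono : ∫ ω, ∑ x : Ω, Real.sqrt
        (((Finset.univ.filter fun i => Z (Sum.inl i) ω = x).card : ℝ) *
          ((Finset.univ.filter fun i => Z (Sum.inr i) ω = x).card : ℝ)) ∂μ
      ≤ ∫ ω, ∑ x : Ω, ∑ i : Fin N, ∑ j : Fin N,
          f (Sum.inl i) x ω * f (Sum.inr j) x ω ∂μ := by
    apply integral_mono hFint hGint
    intro ω
    apply Finset.sum_le_sum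
    intro x _
    have key : ∑ i : Fin N, ∑ j : Fin N, f (Sum.inl i) x ω * f (Sum.inr j) x ω
        = ((Finset.univ.filter fun i => Z (Sum.inl i) ω = x).card : ℝ) *
          ((Finset.univ.filter fun i => Z (Sum.inr i) ω = x).card : ℝ) := by
      rw [hcardl, hcardr, Finset.sum_mul_sum]
    rw [key]
    exact hsqrt _ _
  refine hmono.trans ?_
  have hInt : ∫ ω, ∑ x : Ω, ∑ i : Fin N, ∑ j : Fin N,
      f (Sum.inl i) x ω * f (Sum.inr j) x ω ∂μ = (N : ℝ) ^ 2 * ∑ x, p x ^ 2 := by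
    rw [integral_finset_sum _ fun x _ => integrable_finset_sum _ fun i _ =>
      integrable_finset_sum _ fun j _ => hprodint i j x]
    have : ∀ x : Ω, ∫ ω, ∑ i : Fin N, ∑ j : Fin N, f (Sum.inl i) x ω * f (Sum.inr j) x ω ∂μ
        = (N : ℝ) ^ 2 * p x ^ 2 := by
      intro x
      rw [integral_finset_sum _ fun i _ => integrable_finset_sum _ fun j _ => hprodint i j x]
      have : ∀ i : Fin N, ∫ ω, ∑ j : Fin N, f (Sum.inl i) x ω * f (Sum.inr j) x ω ∂μ
          = (N : ℝ) * p x ^ 2 := by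
        intro i
        rw [integral_finset_sum _ fun j _ => hprodint i j x]
        simp [hprod i _ x, Finset.sum_const, sq, mul_assoc]
      simp [this, Finset.sum_const, sq]
      ring
    simp [this, ← Finset.sum_mul, Finset.mul_sum]
  rw [hInt]
end
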